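/- Let x = (X_1,…,X_k) be a sample generated by a stationary ergodic process distribution ρ_x, and let ρ_y be any stationary ergodic process distribution. Then, with probability 1, lim_{k→∞} d̂((X_1,…,X_k), ρ_y) = d(ρ_x, ρ_y) almost surely. -/

import Mathlib

open MeasureTheory Filter Topology

namespace Paper

variable {A : Type*} [MeasurableSpace A]

/-- The left shift on one-sided infinite sequences. -/
def shift (x : ℕ → A) : ℕ → A := fun n => x (n + 1)

/-- A process distribution is stationary if it is invariant under the left shift. -/
def Stationary (ρ : Measure (ℕ → A)) : Prop := Measure.map shift ρ = ρ

/-- A set of sequences depends only on the first `k` coordinates. -/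
def DependsOn (B : Set (ℕ → A)) (k : ℕ) : Prop :=
  ∀ x y : ℕ → A, (∀ i < k, x i = y i) → (x ∈ B ↔ y ∈ B)

/-- Empirical frequency `ν(X_{1..n}, B)` of the `k`-dimensional event `B` in the
first `n` symbols of `x` (0 when `n < k`). -/
noncomputable def freq (B : Set (ℕ → A)) (k n : ℕ) (x : ℕ → A) : ℝ :=
  if k ≤ n then
    (∑ i ∈ Finset.range (n - k + 1), Set.indicator B (fun _ => (1 : ℝ)) fun j => x (i + j)) /
      ((n : ℝ) - k + 1)
  else 0

/-- Ergodicity: the empirical frequency of every finite-dimensional event converges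
almost surely to a constant. -/
def ErgodicFreq (ρ : Measure (ℕ → A)) : Prop :=
  ∀ (k : ℕ) (B : Set (ℕ → A)), MeasurableSet B → DependsOn B k →
    ∃ c : ℝ, ∀ᵐ x ∂ρ, Tendsto (fun n => freq B k n x) atTop (𝓝 c)

/-- A stationary ergodic process distribution. -/
def StatErg (ρ : Measure (ℕ → A)) : Prop :=
  IsProbabilityMeasure ρ ∧ Stationary ρ ∧ ErgodicFreq ρ

/-- A fixed sequence `(B_i)` of finite-dimensional cylinder events generating the Borel
σ-algebra of `A^∞`, with `dim i` the dimension of `B i`. -/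
structure CylBasis (A : Type*) [MeasurableSpace A] where
  B : ℕ → Set (ℕ → A)
  dim : ℕ → ℕ
  dim_pos : ∀ i, 0 < dim i
  meas : ∀ i, MeasurableSet (B i)
  dep : ∀ i, DependsOn (B i) (dim i)
  gen : MeasurableSpace.generateFrom (Set.range B) = (inferInstance : MeasurableSpace (ℕ → A))

/-- Weights `w_i = 1/(i(i+1))` (indexing from 0: `w_i = 1/((i+1)(i+2))`). -/
noncomputable def wt (i : ℕ) : ℝ := 1 / ((i + 1) * (i + 2))

/-- The distributional distance `d(ρ₁,ρ₂) = Σ_i w_i |ρ₁(B_i) − ρ₂(B_i)|`. -/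
noncomputable def dd (𝓑 : CylBasis A) (ρ₁ ρ₂ : Measure (ℕ → A)) : ℝ :=
  ∑' i, wt i * |(ρ₁ (𝓑.B i)).toReal - (ρ₂ (𝓑.B i)).toReal|

/-- The empirical distributional distance `d̂` between the first `n` symbols of `x`
and the first `m` symbols of `y`. -/
noncomputable def hatd2 (𝓑 : CylBasis A) (n m : ℕ) (x y : ℕ → A) : ℝ :=
  ∑' i, wt i * |freq (𝓑.B i) (𝓑.dim i) n x - freq (𝓑.B i) (𝓑.dim i) m y|


/-- The empirical distributional distance `d̂` between the first `n` symbols of a sample `x`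
and a process distribution `ρ`. -/
noncomputable def hatd1 (𝓑 : CylBasis A) (n : ℕ) (x : ℕ → A) (ρ : Measure (ℕ → A)) : ℝ :=
  ∑' i, wt i * |freq (𝓑.B i) (𝓑.dim i) n x - (ρ (𝓑.B i)).toReal|

/-! ### Auxiliary lemmas -/

/-- The `i`-fold shift, written directly. -/
def shiftT (i : ℕ) (x : ℕ → A) : ℕ → A := fun j => x (i + j)

lemma shift_measurable : Measurable (shift : (ℕ → A) → (ℕ → A)) :=
  measurable_pi_lambda _ fun j => measurable_pi_apply (j + 1)

lemma shiftT_measurable (i : ℕ) : Measurable (shiftT i : (ℕ → A) → (ℕ → A)) :=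
  measurable_pi_lambda _ fun j => measurable_pi_apply (i + j)

lemma shiftT_succ (i : ℕ) :
    (shiftT (i + 1) : (ℕ → A) → (ℕ → A)) = shiftT i ∘ shift := by
  funext x j
  simp only [shiftT, Function.comp_apply, shift]
  congr 1
  omega

lemma map_shiftT {ρ : Measure (ℕ → A)} (hρ : Stationary ρ) (i : ℕ) :
    Measure.map (shiftT i) ρ = ρ := by
  induction i with
  | zero =>
      have : (shiftT 0 : (ℕ → A) → (ℕ → A)) = id := by funext x j; simp [shiftT]
      rw [this, Measure.map_id]
  | succ i ih =>
      rw [shiftT_succ, ← Measure.map_map (shiftT_measurable i) shift_measurable, hρ, ih]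

lemma indicator_apply_le_one (B : Set (ℕ → A)) (y : ℕ → A) :
    Set.indicator B (fun _ => (1 : ℝ)) y ≤ 1 := by
  classical
  by_cases h : y ∈ B <;> simp [Set.indicator_apply, h]

lemma indicator_apply_nonneg (B : Set (ℕ → A)) (y : ℕ → A) :
    0 ≤ Set.indicator B (fun _ => (1 : ℝ)) y := by
  classical
  by_cases h : y ∈ B <;> simp [Set.indicator_apply, h]

lemma freq_nonneg (B : Set (ℕ → A)) (k n : ℕ) (x : ℕ → A) : 0 ≤ freq B k n x := by
  unfold freq
  split
  · rename_i h
    have hkn : (k : ℝ) ≤ n := Nat.cast_le.mpr h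
    apply div_nonneg
    · exact Finset.sum_nonneg fun i _ => indicator_apply_nonneg _ _
    · linarith
  · exact le_refl 0

lemma freq_le_one (B : Set (ℕ → A)) (k n : ℕ) (x : ℕ → A) : freq B k n x ≤ 1 := by
  unfold freq
  split
  · rename_i h
    have hkn : (k : ℝ) ≤ n := Nat.cast_le.mpr h
    have hden : (0 : ℝ) < (n : ℝ) - k + 1 := by linarith
    rw [div_le_one hden]
    calc (∑ i ∈ Finset.range (n - k + 1), Set.indicator B (fun _ => (1 : ℝ)) fun j => x (i + j))
        ≤ ∑ i ∈ Finset.range (n - k + 1), (1 : ℝ) :=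
          Finset.sum_le_sum fun i _ => indicator_apply_le_one _ _
      _ = ((n - k + 1 : ℕ) : ℝ) := by simp
      _ = (n : ℝ) - k + 1 := by push_cast [Nat.cast_sub h]; ring
  · exact zero_le_one

lemma freq_measurable (B : Set (ℕ → A)) (hB : MeasurableSet B) (k n : ℕ) :
    Measurable (fun x => freq B k n x) := by
  unfold freq
  split
  · apply Measurable.div_const
    apply Finset.measurable_sum
    intro i _
    exact (measurable_const.indicator hB).comp (shiftT_measurable i)
  · exact measurable_const

lemma integral_freq {ρ : Measure (ℕ → A)} [IsProbabilityMeasure ρ]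
    (hρ : Stationary ρ) (B : Set (ℕ → A)) (hB : MeasurableSet B) {k n : ℕ} (hkn : k ≤ n) :
    ∫ x, freq B k n x ∂ρ = (ρ B).toReal := by
  have hterm : ∀ i : ℕ,
      (fun x : ℕ → A => Set.indicator B (fun _ => (1 : ℝ)) fun j => x (i + j))
        = Set.indicator ((shiftT i) ⁻¹' B) (fun _ => (1 : ℝ)) := by
    intro i
    funext x
    have hfx : (fun j => x (i + j)) = shiftT i x := rfl
    rw [hfx]
    by_cases h : shiftT i x ∈ B
    · rw [Set.indicator_of_mem h, Set.indicator_of_mem (Set.mem_preimage.mpr h)]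
    · rw [Set.indicator_of_notMem h,
        Set.indicator_of_notMem (fun hx => h (Set.mem_preimage.mp hx))]
  have hmeasB : ∀ i : ℕ, MeasurableSet ((shiftT i : (ℕ → A) → (ℕ → A)) ⁻¹' B) :=
    fun i => (shiftT_measurable i) hB
  have hint : ∀ i : ℕ, Integrable
      (Set.indicator ((shiftT i : (ℕ → A) → (ℕ → A)) ⁻¹' B) (fun _ => (1 : ℝ))) ρ :=
    fun i => (integrable_const (1 : ℝ)).indicator (hmeasB i)
  have hμ : ∀ i : ℕ, ρ ((shiftT i : (ℕ → A) → (ℕ → A)) ⁻¹' B) = ρ B := by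
    intro i
    rw [← Measure.map_apply (shiftT_measurable i) hB, map_shiftT hρ i]
  have hival : ∀ i : ℕ,
      ∫ x, Set.indicator ((shiftT i : (ℕ → A) → (ℕ → A)) ⁻¹' B) (fun _ => (1 : ℝ)) x ∂ρ
        = (ρ B).toReal := by
    intro i
    rw [integral_indicator_const (1 : ℝ) (hmeasB i), measureReal_def, hμ i]
    simp
  have hkn' : (k : ℝ) ≤ n := Nat.cast_le.mpr hkn
  have hden : ((n : ℝ) - k + 1) ≠ 0 := by linarith
  simp only [freq, if_pos hkn]
  rw [integral_div]
  have hsum : ∫ x, (∑ i ∈ Finset.range (n - k + 1),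
      Set.indicator B (fun _ => (1 : ℝ)) fun j => x (i + j)) ∂ρ
      = ((n - k + 1 : ℕ) : ℝ) * (ρ B).toReal := by
    have : ∀ i ∈ Finset.range (n - k + 1), Integrable
        (fun x : ℕ → A => Set.indicator B (fun _ => (1 : ℝ)) fun j => x (i + j)) ρ := by
      intro i _
      rw [hterm i]; exact hint i
    rw [integral_finset_sum _ this]
    have : ∀ i ∈ Finset.range (n - k + 1),
        (∫ x, (Set.indicator B (fun _ => (1 : ℝ)) fun j => x (i + j)) ∂ρ) = (ρ B).toReal := by
      intro i _
      rw [hterm i]; exact hival i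
    rw [Finset.sum_congr rfl this]
    simp [mul_comm]
  rw [hsum]
  have hcast : ((n - k + 1 : ℕ) : ℝ) = (n : ℝ) - k + 1 := by
    push_cast [Nat.cast_sub hkn]; ring
  rw [hcast]
  field_simp

/-- Identification of the ergodic limit constant. -/
lemma ergodic_const_eq {ρ : Measure (ℕ → A)} [IsProbabilityMeasure ρ]
    (hρ : Stationary ρ) (B : Set (ℕ → A)) (hB : MeasurableSet B) (k : ℕ) {c : ℝ}
    (hc : ∀ᵐ x ∂ρ, Tendsto (fun n => freq B k n x) atTop (𝓝 c)) :
    c = (ρ B).toReal := by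
  have hDCT : Tendsto (fun n => ∫ x, freq B k n x ∂ρ) atTop (𝓝 (∫ _, c ∂ρ)) := by
    apply tendsto_integral_of_dominated_convergence (fun _ => (1 : ℝ))
    · exact fun n => (freq_measurable B hB k n).aestronglyMeasurable
    · exact integrable_const 1
    · intro n
      filter_upwards with x
      rw [Real.norm_eq_abs, abs_le]
      exact ⟨by linarith [freq_nonneg B k n x], freq_le_one B k n x⟩
    · exact hc
  have h1 : Tendsto (fun n => ∫ x, freq B k n x ∂ρ) atTop (𝓝 c) := by
    simpa using hDCT
  have h2 : Tendsto (fun n => ∫ x, freq B k n x ∂ρ) atTop (𝓝 ((ρ B).toReal)) := by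
    apply Tendsto.congr' _ (tendsto_const_nhds (x := (ρ B).toReal))
    filter_upwards [eventually_ge_atTop k] with n hn
    exact (integral_freq hρ B hB hn).symm
  exact tendsto_nhds_unique h1 h2

lemma wt_pos (i : ℕ) : 0 < wt i := by
  unfold wt; positivity

lemma summable_wt : Summable wt := by
  have h2 : Summable (fun n : ℕ => 1 / ((n : ℝ)) ^ 2) := by
    simpa using Real.summable_one_div_nat_pow.mpr (by norm_num : 1 < 2)
  have hs : Summable (fun i : ℕ => 1 / ((i : ℝ) + 1) ^ 2) := by
    have := (summable_nat_add_iff (f := fun n : ℕ => 1 / ((n : ℝ)) ^ 2) 1).mpr h2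
    simpa using this
  refine Summable.of_nonneg_of_le (fun i => (wt_pos i).le) (fun i => ?_) hs
  unfold wt
  apply one_div_le_one_div_of_le
  · positivity
  · have : (0 : ℝ) ≤ i := Nat.cast_nonneg i
    nlinarith

/-- If a sample is generated by a stationary ergodic process distribution
`ρx`, then for any stationary ergodic `ρy`, with probability 1 the empirical distributional
distance between the sample and `ρy` converges to `d(ρx,ρy)`. -/
theorem empirical_distance_to_measure_consistent (𝓑 : CylBasis A)
    (ρx ρy : Measure (ℕ → A)) (hx : StatErg ρx) (hy : StatErg ρy) :
    ∀ᵐ x ∂ρx, Tendsto (fun k => hatd1 𝓑 k x ρy) atTop (𝓝 (dd 𝓑 ρx ρy)) := by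
  obtain ⟨hxP, hxS, hxE⟩ := hx
  obtain ⟨hyP, _, _⟩ := hy
  haveI := hxP
  haveI := hyP
  -- for each i, the empirical frequency converges a.s. to ρx (B i)
  have key : ∀ i : ℕ, ∀ᵐ x ∂ρx,
      Tendsto (fun n => freq (𝓑.B i) (𝓑.dim i) n x) atTop (𝓝 ((ρx (𝓑.B i)).toReal)) := by
    intro i
    obtain ⟨c, hc⟩ := hxE (𝓑.dim i) (𝓑.B i) (𝓑.meas i) (𝓑.dep i)
    have : c = (ρx (𝓑.B i)).toReal := ergodic_const_eq hxS (𝓑.B i) (𝓑.meas i) (𝓑.dim i) hc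
    rw [← this]
    exact hc
  rw [← ae_all_iff] at key
  filter_upwards [key] with x hx'
  unfold hatd1 dd
  apply tendsto_tsum_of_dominated_convergence (bound := wt) summable_wt
  · intro i
    apply Tendsto.const_mul
    apply Tendsto.abs
    exact (hx' i).sub_const _
  · filter_upwards with n
    intro i
    have h1 : 0 ≤ freq (𝓑.B i) (𝓑.dim i) n x := freq_nonneg _ _ _ _
    have h2 : freq (𝓑.B i) (𝓑.dim i) n x ≤ 1 := freq_le_one _ _ _ _
    have h3 : 0 ≤ (ρy (𝓑.B i)).toReal := ENNReal.toReal_nonneg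
    have h4 : (ρy (𝓑.B i)).toReal ≤ 1 := by
      rw [← ENNReal.toReal_one]
      exact ENNReal.toReal_mono (by norm_num) prob_le_one
    rw [Real.norm_eq_abs, abs_mul, abs_of_pos (wt_pos i), abs_abs]
    have : |freq (𝓑.B i) (𝓑.dim i) n x - (ρy (𝓑.B i)).toReal| ≤ 1 := by
      rw [abs_le]; constructor <;> linarith
    calc wt i * |freq (𝓑.B i) (𝓑.dim i) n x - (ρy (𝓑.B i)).toReal|
        ≤ wt i * 1 := by
          apply mul_le_mul_of_nonneg_left this (wt_pos i).le
      _ = wt i := mul_one _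

end Paper
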